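/- Let A be a Banach algebra and J = closure of the union of an increasing net (J_α) of closed ideals. Then for every precompact subset M of A: ‖M/J‖ = inf_α ‖M/J_α‖ = lim_α ‖M/J_α‖, and ρ(M/J) = inf_α ρ(M/J_α) = lim_α ρ(M/J_α), where M/I denotes the image of M in A/I, ‖·‖ the sup of norms, and ρ the joint spectral radius. -/

import Mathlib

open scoped Pointwise
open Filter

section Defs

variable (B : Type*) [NonUnitalNormedRing B] [NormedSpace ℂ B]
  [SMulCommClass ℂ B B] [IsScalarTower ℂ B B]

/-- A closed two-sided ideal of a complex normed algebra. -/
structure ClosedIdeal where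
  carrier : Submodule ℂ B
  isClosed : IsClosed (carrier : Set B)
  mul_mem_left : ∀ (x : B) ⦃a : B⦄, a ∈ carrier → x * a ∈ carrier
  mul_mem_right : ∀ (x : B) ⦃a : B⦄, a ∈ carrier → a * x ∈ carrier

end Defs

variable {A : Type*} [NormedRing A] [NormedAlgebra ℂ A]

/-- The quotient norm of `a` modulo a closed ideal `J`: `‖a/J‖ = dist(a, J)`. -/
noncomputable def qNorm (J : ClosedIdeal A) (a : A) : ℝ :=
  Metric.infDist a (J.carrier : Set A)

/-- The norm `‖M/J‖` of the image of `M` in `A/J`. -/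
noncomputable def qSetNorm (J : ClosedIdeal A) (M : Set A) : ℝ :=
  sSup ((fun a => qNorm J a) '' M)

/-- The joint spectral radius `ρ(M/J)` of the image of `M` in `A/J`. -/
noncomputable def qjsr (J : ClosedIdeal A) (M : Set A) : ℝ :=
  ⨅ n : ℕ+, (qSetNorm J (M ^ (n : ℕ))) ^ ((n : ℝ)⁻¹)

section Aux

variable {A : Type*} [NormedRing A] [NormedAlgebra ℂ A]

lemma ClosedIdeal.nonempty (J : ClosedIdeal A) : ((J.carrier : Set A)).Nonempty :=
  ⟨0, J.carrier.zero_mem⟩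

lemma qNorm_nonneg (J : ClosedIdeal A) (a : A) : 0 ≤ qNorm J a :=
  Metric.infDist_nonneg

lemma qNorm_le_norm (J : ClosedIdeal A) (a : A) : qNorm J a ≤ ‖a‖ := by
  simpa [qNorm] using Metric.infDist_le_dist_of_mem (x := a) J.carrier.zero_mem

lemma qNorm_anti {I I' : ClosedIdeal A} (h : (I.carrier : Set A) ⊆ I'.carrier) (a : A) :
    qNorm I' a ≤ qNorm I a :=
  Metric.infDist_le_infDist_of_subset h I.nonempty

lemma qNorm_le_add_dist (J : ClosedIdeal A) (a b : A) :
    qNorm J a ≤ qNorm J b + dist a b :=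
  Metric.infDist_le_infDist_add_dist

lemma bddBelow_range_of_nonneg {ι : Sort*} {f : ι → ℝ} (h : ∀ i, 0 ≤ f i) :
    BddBelow (Set.range f) :=
  ⟨0, by rintro _ ⟨i, rfl⟩; exact h i⟩

/-- `dist(a, J) = inf_α dist(a, J_α)` when `J` is the closure of the union. -/
lemma qNorm_eq_iInf {ι : Type*} [Nonempty ι]
    (Jf : ι → ClosedIdeal A) (J : ClosedIdeal A)
    (hJ : (J.carrier : Set A) = closure (⋃ α, ((Jf α).carrier : Set A)))
    (a : A) : qNorm J a = ⨅ α, qNorm (Jf α) a := by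
  have hU : (⋃ α, ((Jf α).carrier : Set A)).Nonempty :=
    (Classical.arbitrary ι) |> fun α => ⟨0, Set.mem_iUnion.2 ⟨α, (Jf α).carrier.zero_mem⟩⟩
  have h1 : qNorm J a = Metric.infDist a (⋃ α, ((Jf α).carrier : Set A)) := by
    rw [qNorm, hJ, Metric.infDist_closure]
  rw [h1]
  apply le_antisymm
  · exact le_ciInf fun α =>
      Metric.infDist_le_infDist_of_subset (Set.subset_iUnion
        (fun α => ((Jf α).carrier : Set A)) α) (Jf α).nonempty
  · by_contra hlt
    push_neg at hlt
    obtain ⟨y, hy, hdy⟩ := (Metric.infDist_lt_iff hU).1 hlt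
    obtain ⟨α, hyα⟩ := Set.mem_iUnion.1 hy
    exact absurd hdy (not_lt.2 <|
      le_trans (ciInf_le (bddBelow_range_of_nonneg fun α => qNorm_nonneg _ _) α)
        (Metric.infDist_le_dist_of_mem hyα))

lemma qSetNorm_nonneg (J : ClosedIdeal A) (M : Set A) : 0 ≤ qSetNorm J M :=
  Real.sSup_nonneg (by rintro _ ⟨a, _, rfl⟩; exact qNorm_nonneg _ _)

lemma qSetNorm_bddAbove (J : ClosedIdeal A) {M : Set A} (h : Bornology.IsBounded M) :
    BddAbove ((fun a => qNorm J a) '' M) := by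
  obtain ⟨C, hC⟩ := isBounded_iff_forall_norm_le.1 h
  exact ⟨C, by rintro _ ⟨a, ha, rfl⟩; exact (qNorm_le_norm J a).trans (hC a ha)⟩

lemma qNorm_le_qSetNorm (J : ClosedIdeal A) {M : Set A} (h : Bornology.IsBounded M)
    {a : A} (ha : a ∈ M) : qNorm J a ≤ qSetNorm J M :=
  le_csSup (qSetNorm_bddAbove J h) ⟨a, ha, rfl⟩

lemma qSetNorm_anti {I I' : ClosedIdeal A} (h : (I.carrier : Set A) ⊆ I'.carrier)
    {M : Set A} (hM : Bornology.IsBounded M) : qSetNorm I' M ≤ qSetNorm I M := by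
  apply Real.sSup_le _ (qSetNorm_nonneg _ _)
  rintro _ ⟨a, ha, rfl⟩
  exact (qNorm_anti h a).trans (qNorm_le_qSetNorm I hM ha)

/-- Key approximation step, using total boundedness and directedness. -/
lemma qSetNorm_exists_le {ι : Type*} [Preorder ι] [Nonempty ι] [IsDirected ι (· ≤ ·)]
    (Jf : ι → ClosedIdeal A) (hmono : Monotone fun α => (Jf α).carrier)
    (J : ClosedIdeal A)
    (hJ : (J.carrier : Set A) = closure (⋃ α, ((Jf α).carrier : Set A)))
    {M : Set A} (hM : TotallyBounded M) {ε : ℝ} (hε : 0 < ε) :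
    ∃ α, qSetNorm (Jf α) M ≤ qSetNorm J M + ε := by
  classical
  have hMb : Bornology.IsBounded M := hM.isBounded
  have hε2 : 0 < ε / 2 := by linarith
  -- choose finite ε/2-net with centers in M
  obtain ⟨t, hts, htfin, htcov⟩ := (totallyBounded_iff_subset.1 hM)
    {p : A × A | dist p.1 p.2 < ε / 2} (Metric.dist_mem_uniformity hε2)
  -- choose for each point an index almost realizing the infimum
  have hchoice : ∀ y : A, ∃ α, qNorm (Jf α) y < qNorm J y + ε / 2 := by
    intro y
    have h1 : qNorm J y = ⨅ α, qNorm (Jf α) y := qNorm_eq_iInf Jf J hJ y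
    have h2 : (⨅ α, qNorm (Jf α) y) < qNorm J y + ε / 2 := by rw [← h1]; linarith
    exact exists_lt_of_ciInf_lt h2
  choose g hg using hchoice
  obtain ⟨α, hα⟩ := (htfin.toFinset.image g).exists_le
  refine ⟨α, Real.sSup_le ?_ (by linarith [qSetNorm_nonneg J M])⟩
  rintro _ ⟨a, ha, rfl⟩
  obtain ⟨y, hyt, hay⟩ : ∃ y ∈ t, (a, y) ∈ {p : A × A | dist p.1 p.2 < ε / 2} := by
    have := htcov ha
    simpa using this
  have hgy : g y ≤ α := hα _ (Finset.mem_image.2 ⟨y, htfin.mem_toFinset.2 hyt, rfl⟩)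
  have h1 : qNorm (Jf α) a ≤ qNorm (Jf α) y + dist a y := qNorm_le_add_dist _ _ _
  have h2 : qNorm (Jf α) y ≤ qNorm (Jf (g y)) y := qNorm_anti (hmono hgy) y
  have h3 : qNorm (Jf (g y)) y < qNorm J y + ε / 2 := hg y
  have h4 : qNorm J y ≤ qSetNorm J M := qNorm_le_qSetNorm J hMb (hts hyt)
  have h5 : dist a y < ε / 2 := hay
  linarith

/-- The main statement for `qSetNorm` of a totally bounded set. -/
lemma qSetNorm_eq_iInf {ι : Type*} [Preorder ι] [Nonempty ι] [IsDirected ι (· ≤ ·)]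
    (Jf : ι → ClosedIdeal A) (hmono : Monotone fun α => (Jf α).carrier)
    (J : ClosedIdeal A)
    (hJ : (J.carrier : Set A) = closure (⋃ α, ((Jf α).carrier : Set A)))
    {M : Set A} (hM : TotallyBounded M) :
    qSetNorm J M = ⨅ α, qSetNorm (Jf α) M := by
  have hMb : Bornology.IsBounded M := hM.isBounded
  have hle : ∀ α, qSetNorm J M ≤ qSetNorm (Jf α) M := by
    intro α
    refine qSetNorm_anti ?_ hMb
    rw [hJ]
    exact (Set.subset_iUnion (fun α => ((Jf α).carrier : Set A)) α).trans subset_closure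
  apply le_antisymm (le_ciInf hle)
  apply le_of_forall_pos_le_add
  intro ε hε
  obtain ⟨α, hα⟩ := qSetNorm_exists_le Jf hmono J hJ hM hε
  exact (ciInf_le (bddBelow_range_of_nonneg fun α => qSetNorm_nonneg _ _) α).trans hα

lemma totallyBounded_pow [CompleteSpace A] {M : Set A} (hM : TotallyBounded M)
    (n : ℕ+) : TotallyBounded (M ^ (n : ℕ)) := by
  have hK : IsCompact (closure M) :=
    TotallyBounded.isCompact_of_isClosed hM.closure isClosed_closure
  have hKn : ∀ m : ℕ, IsCompact ((closure M) ^ (m + 1)) := by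
    intro m
    induction m with
    | zero => simpa using hK
    | succ k ih => rw [pow_succ]; exact ih.mul hK
  obtain ⟨m, hm⟩ : ∃ m : ℕ, (n : ℕ) = m + 1 := ⟨(n : ℕ) - 1, (Nat.succ_pred_eq_of_pos n.2).symm⟩
  refine TotallyBounded.subset ?_ (hKn m).totallyBounded
  rw [hm]
  exact Set.pow_subset_pow_left subset_closure

lemma iInf_comm_real {ι κ : Type*} [Nonempty ι] [Nonempty κ] (f : ι → κ → ℝ)
    (h : ∀ i j, 0 ≤ f i j) : ⨅ i, ⨅ j, f i j = ⨅ j, ⨅ i, f i j := by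
  have hb1 : ∀ i, BddBelow (Set.range (f i)) := fun i => bddBelow_range_of_nonneg (h i)
  have hb2 : ∀ j, BddBelow (Set.range fun i => f i j) :=
    fun j => bddBelow_range_of_nonneg (fun i => h i j)
  have hnn1 : ∀ i, 0 ≤ ⨅ j, f i j := fun i => Real.iInf_nonneg (h i)
  have hnn2 : ∀ j, 0 ≤ ⨅ i, f i j := fun j => Real.iInf_nonneg (fun i => h i j)
  apply le_antisymm
  · refine le_ciInf fun j => le_ciInf fun i => ?_
    exact (ciInf_le (bddBelow_range_of_nonneg hnn1) i).trans (ciInf_le (hb1 i) j)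
  · refine le_ciInf fun i => le_ciInf fun j => ?_
    exact (ciInf_le (bddBelow_range_of_nonneg hnn2) j).trans (ciInf_le (hb2 j) i)

/-- Passing a nonnegative conditional infimum through `x ↦ x ^ c`, `c > 0`. -/
lemma rpow_iInf {ι : Type*} [Nonempty ι] (g : ι → ℝ) (hg : ∀ i, 0 ≤ g i)
    {c : ℝ} (hc : 0 < c) : (⨅ i, g i) ^ c = ⨅ i, (g i) ^ c := by
  set f : ℝ → ℝ := fun x => (max x 0) ^ c with hf
  have hmono : Monotone f := fun x y hxy =>
    Real.rpow_le_rpow (le_max_right x 0) (max_le_max hxy le_rfl) hc.le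
  have hcont : ContinuousAt f (⨅ i, g i) :=
    ContinuousAt.rpow_const (continuous_id.max continuous_const).continuousAt (Or.inr hc.le)
  have h0 : 0 ≤ ⨅ i, g i := Real.iInf_nonneg hg
  have key : f (⨅ i, g i) = ⨅ i, f (g i) :=
    hmono.map_ciInf_of_continuousAt hcont (bddBelow_range_of_nonneg hg)
  have h1 : f (⨅ i, g i) = (⨅ i, g i) ^ c := by rw [hf]; simp [max_eq_left h0]
  have h2 : ∀ i, f (g i) = (g i) ^ c := fun i => by rw [hf]; simp [max_eq_left (hg i)]
  rw [← h1, key]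
  exact iInf_congr h2

end Aux

/-- if `J` is the closure of the union of an increasing net
`(J_α)` of closed ideals of a Banach algebra `A`, then for every precompact
`M ⊆ A` one has `‖M/J‖ = inf_α ‖M/J_α‖ = lim_α ‖M/J_α‖` and
`ρ(M/J) = inf_α ρ(M/J_α) = lim_α ρ(M/J_α)`. -/
theorem qSetNorm_qjsr_of_directed_union {A : Type*} [NormedRing A] [NormedAlgebra ℂ A]
    [CompleteSpace A] {ι : Type*} [Preorder ι] [Nonempty ι] [IsDirected ι (· ≤ ·)]
    (Jf : ι → ClosedIdeal A) (hmono : Monotone fun α => (Jf α).carrier)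
    (J : ClosedIdeal A)
    (hJ : (J.carrier : Set A) = closure (⋃ α, ((Jf α).carrier : Set A)))
    (M : Set A) (hM : TotallyBounded M) :
    (qSetNorm J M = ⨅ α, qSetNorm (Jf α) M) ∧
    Tendsto (fun α => qSetNorm (Jf α) M) atTop (nhds (qSetNorm J M)) ∧
    (qjsr J M = ⨅ α, qjsr (Jf α) M) ∧
    Tendsto (fun α => qjsr (Jf α) M) atTop (nhds (qjsr J M)) := by
  have hsub : ∀ {α β : ι}, α ≤ β → ((Jf α).carrier : Set A) ⊆ (Jf β).carrier :=
    fun {α β} h => hmono h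
  have htbpow : ∀ n : ℕ+, TotallyBounded (M ^ (n : ℕ)) := totallyBounded_pow hM
  -- Part 1
  have h1 : qSetNorm J M = ⨅ α, qSetNorm (Jf α) M :=
    qSetNorm_eq_iInf Jf hmono J hJ hM
  -- antitone in `α`
  have hanti : Antitone fun α => qSetNorm (Jf α) M :=
    fun α β h => qSetNorm_anti (hsub h) hM.isBounded
  have h2 : Tendsto (fun α => qSetNorm (Jf α) M) atTop (nhds (qSetNorm J M)) := by
    rw [h1]
    exact tendsto_atTop_ciInf hanti
      (bddBelow_range_of_nonneg fun α => qSetNorm_nonneg _ _)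
  -- Part 2: the jsr
  have hposentry : ∀ (I : ClosedIdeal A) (n : ℕ+),
      0 ≤ qSetNorm I (M ^ (n : ℕ)) ^ ((n : ℝ)⁻¹) :=
    fun I n => Real.rpow_nonneg (qSetNorm_nonneg _ _) _
  have hcn : ∀ n : ℕ+, (0 : ℝ) < (n : ℝ)⁻¹ := fun n => by positivity
  have hstep : ∀ n : ℕ+, qSetNorm J (M ^ (n : ℕ)) ^ ((n : ℝ)⁻¹)
      = ⨅ α, qSetNorm (Jf α) (M ^ (n : ℕ)) ^ ((n : ℝ)⁻¹) := by
    intro n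
    rw [qSetNorm_eq_iInf Jf hmono J hJ (htbpow n)]
    exact rpow_iInf _ (fun α => qSetNorm_nonneg _ _) (hcn n)
  have h3 : qjsr J M = ⨅ α, qjsr (Jf α) M := by
    unfold qjsr
    calc (⨅ n : ℕ+, qSetNorm J (M ^ (n : ℕ)) ^ ((n : ℝ)⁻¹))
        = ⨅ n : ℕ+, ⨅ α, qSetNorm (Jf α) (M ^ (n : ℕ)) ^ ((n : ℝ)⁻¹) :=
          iInf_congr hstep
      _ = ⨅ α, ⨅ n : ℕ+, qSetNorm (Jf α) (M ^ (n : ℕ)) ^ ((n : ℝ)⁻¹) :=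
          iInf_comm_real _ (fun n α => hposentry _ n)
  have hjsranti : Antitone fun α => qjsr (Jf α) M := by
    intro α β h
    apply ciInf_mono (bddBelow_range_of_nonneg fun n => hposentry _ n)
    intro n
    exact Real.rpow_le_rpow (qSetNorm_nonneg _ _)
      (qSetNorm_anti (hsub h) (htbpow n).isBounded) (hcn n).le
  have h4 : Tendsto (fun α => qjsr (Jf α) M) atTop (nhds (qjsr J M)) := by
    rw [h3]
    exact tendsto_atTop_ciInf hjsranti
      (bddBelow_range_of_nonneg fun α => Real.iInf_nonneg fun n => hposentry _ n)
  exact ⟨h1, h2, h3, h4⟩
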